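/- Let A > 0, B ≤ 0 with A + B > 0 (so that 1 + B·δ'(c) > 0), and δ the inverse of f(x) = Ax + x/(1+x). Define γ̃(c) = δ(c)/(1 + B·δ'(c)). Then for any c₁,…,c_K ≥ 0 with mean c̄ = (1/K)∑c_k, ∑_{k=1}^K γ̃(c_k) ≤ γ̃(K·c̄), i.e., concentrating the total resource in one cluster maximizes the sum. -/
import Mathlib

private lemma fmono (A : ℝ) (hA : 0 < A) {x y : ℝ} (hy : 0 ≤ y) (hxy : y < x) :
    A * y + y / (1 + y) < A * x + x / (1 + x) := by
  have h1 : (0:ℝ) < 1 + y := by linarith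
  have h2 : (0:ℝ) < 1 + x := by linarith
  have hfrac : y / (1 + y) ≤ x / (1 + x) := by
    rw [div_le_div_iff₀ h1 h2]; nlinarith
  nlinarith

/-- With `A > 0`, `B ≤ 0`, `A + B > 0`, `δ = f⁻¹` for `f(x) = Ax + x/(1+x)`, and
`γ̃(c) = δ(c)/(1 + B·δ'(c))` where `δ'(c) = 1/(A + 1/(1+δ(c))²)`: for any
nonnegative `c₁,…,c_K` with mean `c̄`, `∑ γ̃(c_k) ≤ γ̃(K·c̄) = γ̃(∑ c_k)`. -/
theorem concentration_maximizes_sum (A B : ℝ) (hA : 0 < A) (hB : B ≤ 0)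
    (hAB : 0 < A + B) (δ : ℝ → ℝ)
    (hδ : ∀ c : ℝ, 0 ≤ c → 0 ≤ δ c ∧ A * δ c + δ c / (1 + δ c) = c)
    (K : ℕ) (c : Fin K → ℝ) (hc : ∀ k, 0 ≤ c k) :
    ∑ k, δ (c k) / (1 + B * (1 / (A + 1 / (1 + δ (c k)) ^ 2)))
      ≤ δ (∑ k, c k) / (1 + B * (1 / (A + 1 / (1 + δ (∑ k, c k)) ^ 2))) := by
  have key : ∀ t, 0 ≤ t → 0 ≤ δ t := fun t ht => (hδ t ht).1
  have feq : ∀ t, 0 ≤ t → A * δ t + δ t / (1 + δ t) = t := fun t ht => (hδ t ht).2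
  -- δ is monotone
  have δmono : ∀ u v, 0 ≤ u → u ≤ v → δ u ≤ δ v := by
    intro u v hu huv
    by_contra h; push_neg at h
    have hm := fmono A hA (key v (hu.trans huv)) h
    rw [feq u hu, feq v (hu.trans huv)] at hm
    linarith
  -- δ 0 = 0
  have δ0 : δ 0 = 0 := by
    have h := hδ 0 le_rfl
    have h2 : 0 ≤ δ 0 / (1 + δ 0) := div_nonneg h.1 (by linarith [h.1])
    nlinarith [h.1, h.2]
  -- pairwise superadditivity
  have hadd : ∀ u v, 0 ≤ u → 0 ≤ v → δ u + δ v ≤ δ (u + v) := by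
    intro u v hu hv
    by_contra h; push_neg at h
    have huvn : 0 ≤ u + v := by linarith
    have hx := key u hu; have hy := key v hv
    have hm := fmono A hA (key (u+v) huvn) h
    rw [feq (u+v) huvn] at hm
    have h1 : (0:ℝ) < 1 + δ u := by linarith
    have h2 : (0:ℝ) < 1 + δ v := by linarith
    have h3 : (0:ℝ) < 1 + (δ u + δ v) := by linarith
    have hfrac : (δ u + δ v) / (1 + (δ u + δ v)) ≤ δ u / (1 + δ u) + δ v / (1 + δ v) := by
      rw [div_add_div _ _ (ne_of_gt h1) (ne_of_gt h2), div_le_div_iff₀ h3 (by positivity)]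
      nlinarith [mul_nonneg hx hy, mul_nonneg (mul_nonneg hx hy) (add_nonneg hx hy)]
    have hsub : A * (δ u + δ v) + (δ u + δ v) / (1 + (δ u + δ v)) ≤ u + v := by
      have e1 := feq u hu; have e2 := feq v hv
      nlinarith
    linarith
  -- superadditivity over sums
  have hsumle : ∀ s : Finset (Fin K), ∑ k ∈ s, δ (c k) ≤ δ (∑ k ∈ s, c k) := by
    intro s
    induction s using Finset.induction_on with
    | empty => simp [δ0]
    | @insert a s hns ih =>
      rw [Finset.sum_insert hns, Finset.sum_insert hns]
      have hT : 0 ≤ ∑ k ∈ s, c k := Finset.sum_nonneg fun k _ => hc k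
      calc δ (c a) + ∑ k ∈ s, δ (c k) ≤ δ (c a) + δ (∑ k ∈ s, c k) := by linarith
        _ ≤ δ (c a + ∑ k ∈ s, c k) := hadd _ _ (hc a) hT
  set S := ∑ k, c k with hSdef
  have hS : 0 ≤ S := Finset.sum_nonneg fun k _ => hc k
  have hsum : ∑ k, δ (c k) ≤ δ S := hsumle Finset.univ
  -- denominator positivity
  have hD : ∀ t, 0 ≤ t → 0 < 1 + B * (1 / (A + 1 / (1 + δ t) ^ 2)) := by
    intro t ht
    have hd := key t ht
    have h1 : (0:ℝ) < (1 + δ t) ^ 2 := by positivity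
    have hq : (0:ℝ) < 1 / (1 + δ t) ^ 2 := by positivity
    have hE : (0:ℝ) < A + 1 / (1 + δ t) ^ 2 := by linarith
    have heq : (1:ℝ) + B * (1 / (A + 1 / (1 + δ t) ^ 2))
        = ((A + 1 / (1 + δ t) ^ 2) + B) / (A + 1 / (1 + δ t) ^ 2) := by
      field_simp
    rw [heq]
    exact div_pos (by linarith) hE
  -- denominator monotonicity
  have hDmono : ∀ u v, 0 ≤ u → u ≤ v →
      1 + B * (1 / (A + 1 / (1 + δ v) ^ 2)) ≤ 1 + B * (1 / (A + 1 / (1 + δ u) ^ 2)) := by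
    intro u v hu huv
    have hv : 0 ≤ v := hu.trans huv
    have hdu := key u hu; have hdv := key v hv
    have hδle := δmono u v hu huv
    have h1 : (0:ℝ) < (1 + δ u) ^ 2 := by positivity
    have h2 : (0:ℝ) < (1 + δ v) ^ 2 := by positivity
    have h3 : 1 / (1 + δ v) ^ 2 ≤ 1 / (1 + δ u) ^ 2 :=
      one_div_le_one_div_of_le h1 (by nlinarith)
    have hEu : (0:ℝ) < A + 1 / (1 + δ u) ^ 2 := by positivity
    have hEv : (0:ℝ) < A + 1 / (1 + δ v) ^ 2 := by positivity
    have h4 : 1 / (A + 1 / (1 + δ u) ^ 2) ≤ 1 / (A + 1 / (1 + δ v) ^ 2) :=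
      one_div_le_one_div_of_le hEv (by linarith)
    have h5 := mul_le_mul_of_nonpos_left h4 hB
    linarith
  have hkS : ∀ k : Fin K, c k ≤ S :=
    fun k => Finset.single_le_sum (fun i _ => hc i) (Finset.mem_univ k)
  have hDS := hD S hS
  calc ∑ k, δ (c k) / (1 + B * (1 / (A + 1 / (1 + δ (c k)) ^ 2)))
      ≤ ∑ k, δ (c k) / (1 + B * (1 / (A + 1 / (1 + δ S) ^ 2))) := by
        refine Finset.sum_le_sum fun k _ => ?_
        have h1 := hD (c k) (hc k)
        have h2 := hDmono (c k) S (hc k) (hkS k)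
        have h3 : 1 / (1 + B * (1 / (A + 1 / (1 + δ (c k)) ^ 2)))
            ≤ 1 / (1 + B * (1 / (A + 1 / (1 + δ S) ^ 2))) :=
          one_div_le_one_div_of_le hDS h2
        gcongr
        exact key (c k) (hc k)
    _ = (∑ k, δ (c k)) / (1 + B * (1 / (A + 1 / (1 + δ S) ^ 2))) := by
        rw [Finset.sum_div]
    _ ≤ δ S / (1 + B * (1 / (A + 1 / (1 + δ S) ^ 2))) := by
        gcongr
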